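/- The lifted code C(q|q^ℓ) of an [n,k,d] linear code C over GF(q) is a linear code over GF(q^ℓ) of the same length n, the same dimension k, and the same minimum Hamming distance d. -/

import Mathlib

open Finset

/-- Hamming weight of a vector. -/
noncomputable def wt {ι R : Type*} [Fintype ι] [Zero R] (c : ι → R) : ℕ :=
  Set.ncard {j | c j ≠ 0}

/-- The lifted code `C(q|q^ℓ)`: the `E`-span of (the image in `E^n` of) a code `C ⊆ F^n`. -/
noncomputable def liftCode (F : Type*) {ι : Type*} (E : Type*) [Field F] [Field E] [Algebra F E]
    (C : Submodule F (ι → F)) : Submodule E (ι → E) :=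
  Submodule.span E ((fun c : ι → F => fun j => algebraMap F E (c j)) '' (C : Set (ι → F)))

/-- `A_i(C)`: the number of codewords of Hamming weight `i`. -/
noncomputable def numWt {ι R : Type*} [Fintype ι] [Semiring R] (C : Submodule R (ι → R)) (i : ℕ) : ℕ :=
  Set.ncard {c : ι → R | c ∈ C ∧ wt c = i}

/-- The set of supports of weight-`i` codewords of `C` (without repetition). -/
def codeSupports {ι R : Type*} [Fintype ι] [Semiring R] (C : Submodule R (ι → R)) (i : ℕ) :
    Set (Set ι) :=
  {s | ∃ c, c ∈ C ∧ wt c = i ∧ s = {j | c j ≠ 0}}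

/-- `C` has minimum Hamming distance `d`. -/
def IsMinDist {ι R : Type*} [Fintype ι] [Semiring R] (C : Submodule R (ι → R)) (d : ℕ) : Prop :=
  (∃ c, c ∈ C ∧ c ≠ 0 ∧ wt c = d) ∧ ∀ c, c ∈ C → c ≠ 0 → d ≤ wt c

/-- The dual code under the standard bilinear form. -/
def dualCode {ι R : Type*} [Fintype ι] [CommRing R] (C : Submodule R (ι → R)) :
    Submodule R (ι → R) where
  carrier := {x | ∀ c ∈ C, ∑ j, x j * c j = 0}
  add_mem' := by
    intro a b ha hb c hc
    simp only [Set.mem_setOf_eq] at *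
    simp [Pi.add_apply, add_mul, Finset.sum_add_distrib, ha c hc, hb c hc]
  zero_mem' := by intro c hc; simp
  smul_mem' := by
    intro a x hx c hc
    simp only [Set.mem_setOf_eq] at *
    simp [Pi.smul_apply, smul_eq_mul, mul_assoc, ← Finset.mul_sum, hx c hc]

/-- Evaluation of multivariate polynomials over `GF(2)` as a linear map. -/
noncomputable def evalLM (m : ℕ) :
    MvPolynomial (Fin m) (ZMod 2) →ₗ[ZMod 2] ((Fin m → ZMod 2) → ZMod 2) where
  toFun := fun p x => MvPolynomial.eval x p
  map_add' := by intro p q; funext x; simp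
  map_smul' := by intro a p; funext x; simp

/-- The binary Reed-Muller code `RM₂(r,m)`: evaluations of polynomials of total degree `≤ r`. -/
noncomputable def RM (r m : ℕ) : Submodule (ZMod 2) ((Fin m → ZMod 2) → ZMod 2) :=
  Submodule.map (evalLM m) (MvPolynomial.restrictTotalDegree (Fin m) (ZMod 2) r)

section Aux

variable {F E : Type*} [Field F] [Field E] [Algebra F E] {n : ℕ}

/-- coordinate decomposition: each basis-coordinate of a lifted codeword lies in `C`. -/
lemma decomp_mem {α : Type*} (b : Module.Basis α F E) (C : Submodule F (Fin n → F))
    {x : Fin n → E} (hx : x ∈ liftCode F E C) (a : α) :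
    (fun j => b.repr (x j) a) ∈ C := by
  obtain ⟨m, f, g, hg⟩ := Submodule.mem_span_set'.mp hx
  choose c hcC hcval using fun i : Fin m => (g i).2
  have hxj : ∀ j, x j = ∑ i, (c i j) • f i := by
    intro j
    rw [← hg]
    simp only [Finset.sum_apply, Pi.smul_apply, smul_eq_mul]
    refine Finset.sum_congr rfl fun i _ => ?_
    rw [← hcval i]
    rw [Algebra.smul_def, mul_comm]
  have : (fun j => b.repr (x j) a) = ∑ i, (b.repr (f i) a) • c i := by
    funext j
    simp only [hxj j, map_sum, map_smul, Finsupp.coe_smul, Finsupp.coe_finset_sum,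
      Finset.sum_apply, Pi.smul_apply, smul_eq_mul]
    exact Finset.sum_congr rfl fun i _ => mul_comm _ _
  rw [this]
  exact Submodule.sum_mem _ fun i _ => Submodule.smul_mem _ _ (hcC i)

lemma wt_lift_ge (C : Submodule F (Fin n → F)) {d : ℕ}
    (hd : ∀ c, c ∈ C → c ≠ 0 → d ≤ wt c)
    {x : Fin n → E} (hx : x ∈ liftCode F E C) (hx0 : x ≠ 0) : d ≤ wt x := by
  let b := Module.Basis.ofVectorSpace F E
  obtain ⟨j0, hj0⟩ : ∃ j, x j ≠ 0 := by
    by_contra h; push_neg at h; exact hx0 (funext h)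
  have hrepr : b.repr (x j0) ≠ 0 := fun h => hj0 (by simpa using b.repr.injective (by simp [h]))
  obtain ⟨a, ha⟩ := Finsupp.ne_iff.mp hrepr
  simp only [Finsupp.coe_zero, Pi.zero_apply] at ha
  set D : Fin n → F := fun j => b.repr (x j) a with hD
  have hDC : D ∈ C := decomp_mem b C hx a
  have hD0 : D ≠ 0 := fun h => ha (by simpa [hD] using congrFun h j0)
  refine le_trans (hd D hDC hD0) ?_
  apply Set.ncard_le_ncard _ (Set.toFinite _)
  intro j hj
  simp only [Set.mem_setOf_eq] at hj ⊢
  intro hxj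
  exact hj (by simp [hD, hxj])

end Aux

/-- the lifted code of an `[n,k,d]` code over `F` is an `[n,k,d]` code over `E`. -/
theorem stmt1 {F E : Type*} [Field F] [Field E] [Algebra F E] {n k d : ℕ}
    (C : Submodule F (Fin n → F)) (hk : Module.finrank F C = k) (hk1 : 1 ≤ k)
    (hd : IsMinDist C d) :
    Module.finrank E (liftCode F E C) = k ∧ IsMinDist (liftCode F E C) d := by
  classical
  set φ : (Fin n → F) → (Fin n → E) := fun c j => algebraMap F E (c j) with hφ
  have halg : Function.Injective (algebraMap F E) := (algebraMap F E).injective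
  -- basis of C
  have : Module.Finite F C := inferInstance
  let v : Module.Basis (Fin k) F C := Module.finBasisOfFinrankEq F C hk
  let w : Fin k → (Fin n → E) := fun i => φ (v i)
  -- independence of the ambient images of v
  have hvind : LinearIndependent F (fun i => ((v i : Fin n → F))) :=
    v.linearIndependent.map' C.subtype (Submodule.ker_subtype C)
  let b := Module.Basis.ofVectorSpace F E
  -- independence of w over E
  have hwind : LinearIndependent E w := by
    rw [Fintype.linearIndependent_iff]
    intro g hg i
    have key : ∀ a, ∀ i, b.repr (g i) a = 0 := by
      intro a
      have h2 : (∑ i, (b.repr (g i) a) • ((v i : Fin n → F))) = 0 := by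
        funext j
        have hj : (∑ i, g i • w i) j = 0 := by rw [hg]; rfl
        simp only [Finset.sum_apply, Pi.smul_apply, smul_eq_mul] at hj
        have hj2 : (∑ i, ((v i : Fin n → F) j) • g i) = 0 := by
          rw [← hj]
          exact Finset.sum_congr rfl fun i _ => by
            rw [Algebra.smul_def, mul_comm]
        have := congrArg (fun e => b.repr e a) hj2
        simpa [Finsupp.coe_finset_sum, Finset.sum_apply, mul_comm] using this
      exact fun i => Fintype.linearIndependent_iff.mp hvind _ h2 i
    have : b.repr (g i) = 0 := Finsupp.ext fun a => key a i
    simpa using b.repr.injective (by simpa using this)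
  -- spanning
  have hspan : liftCode F E C = Submodule.span E (Set.range w) := by
    apply le_antisymm
    · rw [liftCode, Submodule.span_le]
      rintro y ⟨c, hc, rfl⟩
      have hcrep : (c : Fin n → F) = ∑ i, (v.repr ⟨c, hc⟩ i) • ((v i : Fin n → F)) := by
        have := v.sum_repr ⟨c, hc⟩
        calc c = ((⟨c, hc⟩ : C) : Fin n → F) := rfl
        _ = ((∑ i, v.repr ⟨c, hc⟩ i • v i : C) : Fin n → F) := by rw [this]
        _ = _ := by push_cast [Submodule.coe_sum]; rfl
      have key : φ c = ∑ i, (algebraMap F E (v.repr ⟨c, hc⟩ i)) • w i := by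
        funext j
        simp only [hφ, Finset.sum_apply, Pi.smul_apply, smul_eq_mul]
        conv_lhs => rw [hcrep]
        simp only [Finset.sum_apply, Pi.smul_apply, smul_eq_mul, map_sum, map_mul]
        rfl
      show φ c ∈ Submodule.span E (Set.range w)
      rw [key]
      exact Submodule.sum_mem _ fun i _ =>
        Submodule.smul_mem _ _ (Submodule.subset_span ⟨i, rfl⟩)
    · rw [Submodule.span_le]
      rintro y ⟨i, rfl⟩
      exact Submodule.subset_span ⟨v i, (v i).2, rfl⟩
  constructor
  · rw [hspan, finrank_span_eq_card hwind, Fintype.card_fin]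
  · constructor
    · obtain ⟨c, hcC, hc0, hcw⟩ := hd.1
      refine ⟨φ c, Submodule.subset_span ⟨c, hcC, rfl⟩, ?_, ?_⟩
      · intro h
        apply hc0
        funext j
        have := congrFun h j
        simpa [hφ, map_eq_zero] using this
      · rw [← hcw]
        unfold wt
        congr 1
        ext j
        simp [hφ, map_eq_zero]
    · exact fun x hx hx0 => wt_lift_ge C hd.2 hx hx0
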